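/- Let R be a unital associative superalgebra over a ring k with 2 invertible and n ≥ 2. Then sq_n(R) = { [[A,B],[ρ(B),ρ(A)]] : A,B ∈ M_n(R), Tr(B) ∈ [R,R] }, where [R,R] is the k-span of all graded commutators in R. -/

import Mathlib

variable {k : Type} [CommRing k] [Invertible (2 : k)]
variable {R : Type} [Ring R] [Algebra k R]

/-- The multiplication of the graded tensor product `R ⊗ Q1`, in the model where
`(a, b)` represents `a ⊗ 1 + b ⊗ ν` (with `ν` odd, `ν² = 1`, Koszul signs via the
grading involution `σ` of `R`). -/
def mulQ (σ : R ≃ₐ[k] R) (p q : R × R) : R × R :=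
  (p.1 * q.1 + p.2 * σ q.2, p.1 * q.2 + p.2 * σ q.1)

/-- The grading involution of `R ⊗ Q1` in the model above. -/
def tauQ (σ : R ≃ₐ[k] R) (p : R × R) : R × R := (σ p.1, -σ p.2)

/-- The grading involution of `R ⊗ Q1` as a `k`-linear map. -/
def tauL (σ : R ≃ₐ[k] R) : (R × R) →ₗ[k] (R × R) :=
  LinearMap.prod (σ.toLinearMap ∘ₗ LinearMap.fst k R R)
    (-(σ.toLinearMap ∘ₗ LinearMap.snd k R R))

/-- The queer Lie superalgebra `q_n(A)` coordinatized by a superalgebra `A` with grading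
involution `s`: block matrices `[[A,B],[ρ(B),ρ(A)]]` inside `gl_{n|n}(A)`, where `ρ = s`
entrywise (so `ρ(a) = (-1)^{|a|} a` on homogeneous elements). -/
def qSub (n : ℕ) (A : Type) [AddCommGroup A] [Module k A] (s : A →ₗ[k] A) :
    Submodule k (Matrix (Fin n ⊕ Fin n) (Fin n ⊕ Fin n) A) where
  carrier := {M | (∀ i j, M (Sum.inr i) (Sum.inr j) = s (M (Sum.inl i) (Sum.inl j))) ∧
                  (∀ i j, M (Sum.inr i) (Sum.inl j) = s (M (Sum.inl i) (Sum.inr j)))}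
  add_mem' := by
    intro M N hM hN
    exact ⟨fun i j => by simp [Matrix.add_apply, hM.1 i j, hN.1 i j],
           fun i j => by simp [Matrix.add_apply, hM.2 i j, hN.2 i j]⟩
  zero_mem' := ⟨fun i j => by simp, fun i j => by simp⟩
  smul_mem' := by
    intro c M hM
    exact ⟨fun i j => by simp [Matrix.smul_apply, hM.1 i j],
           fun i j => by simp [Matrix.smul_apply, hM.2 i j]⟩

/-- The grading involution of `gl_{n|n}(A)`: the parity of `e_{ij}(a)` is `|i| + |j| + |a|`,
so the involution applies `s` entrywise with a sign `-1` on the off-diagonal blocks. -/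
def gInvMat {n : ℕ} {A : Type} [Neg A] (s : A → A)
    (M : Matrix (Fin n ⊕ Fin n) (Fin n ⊕ Fin n) A) :
    Matrix (Fin n ⊕ Fin n) (Fin n ⊕ Fin n) A :=
  Matrix.of fun i j => if i.isLeft = j.isLeft then s (M i j) else -(s (M i j))

/-- The set of graded commutators `[x,y] = xy - (-1)^{|x||y|} yx` of homogeneous elements of
a submodule `V` of `gl_{n|n}(A)` (homogeneity w.r.t. the grading involution `gInvMat s`). -/
def gBrSet (n : ℕ) {A : Type} [Ring A] [Module k A]
    (s : A → A) (V : Submodule k (Matrix (Fin n ⊕ Fin n) (Fin n ⊕ Fin n) A)) :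
    Set (Matrix (Fin n ⊕ Fin n) (Fin n ⊕ Fin n) A) :=
  {z | ∃ x ∈ V, ∃ y ∈ V, ∃ px py : ZMod 2,
    gInvMat s x = ((-1 : ℤ) ^ px.val) • x ∧ gInvMat s y = ((-1 : ℤ) ^ py.val) • y ∧
    z = x * y - ((-1 : ℤ) ^ (px * py).val) • (y * x)}

/-- The derived sub-superalgebra `[V, V]`: the span of graded commutators of homogeneous
elements of `V`. -/
def derivedSub (n : ℕ) {A : Type} [Ring A] [Module k A]
    (s : A → A) (V : Submodule k (Matrix (Fin n ⊕ Fin n) (Fin n ⊕ Fin n) A)) :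
    Submodule k (Matrix (Fin n ⊕ Fin n) (Fin n ⊕ Fin n) A) :=
  Submodule.span k (gBrSet n s V)

/-- The set of graded commutators of homogeneous elements of `R`. -/
def gcSet (A : Type) [AddCommGroup A] (mul : A → A → A) (s : A → A) : Set A :=
  {z | ∃ x y : A, ∃ px py : ZMod 2,
    s x = ((-1 : ℤ) ^ px.val) • x ∧ s y = ((-1 : ℤ) ^ py.val) • y ∧
    z = mul x y - ((-1 : ℤ) ^ (px * py).val) • mul y x}

/-- The linear map sending `[[A,B],[ρ(B),ρ(A)]]` to `Tr(B)`, the trace of the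
upper-right block. -/
def trUR (n : ℕ) : Matrix (Fin n ⊕ Fin n) (Fin n ⊕ Fin n) R →ₗ[k] R where
  toFun M := ∑ i, M (Sum.inl i) (Sum.inr i)
  map_add' := by intro M N; simp [Matrix.add_apply, Finset.sum_add_distrib]
  map_smul' := by intro c M; simp [Matrix.smul_apply, Finset.smul_sum]


open Matrix Sum

set_option linter.unusedSectionVars false

section Aux
variable {σ : R ≃ₐ[k] R} {n : ℕ}

/-- auxiliary: elementary matrix in the even part of `q_n(R)`. -/
def E0 (σ : R ≃ₐ[k] R) (n : ℕ) (i j : Fin n) : R →ₗ[k] Matrix (Fin n ⊕ Fin n) (Fin n ⊕ Fin n) R where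
  toFun a := single (inl i) (inl j) a + single (inr i) (inr j) (σ a)
  map_add' a b := by simp [single_add]; abel
  map_smul' c a := by simp [smul_single, smul_add]

/-- auxiliary: elementary matrix in the odd part of `q_n(R)`. -/
def E1 (σ : R ≃ₐ[k] R) (n : ℕ) (i j : Fin n) : R →ₗ[k] Matrix (Fin n ⊕ Fin n) (Fin n ⊕ Fin n) R where
  toFun a := single (inl i) (inr j) a + single (inr i) (inl j) (σ a)
  map_add' a b := by simp [single_add]; abel
  map_smul' c a := by simp [smul_single, smul_add]

lemma E0_apply (i j : Fin n) (a : R) : E0 σ n i j a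
    = single (inl i) (inl j) a + single (inr i) (inr j) (σ a) := rfl

lemma E1_apply (i j : Fin n) (a : R) : E1 σ n i j a
    = single (inl i) (inr j) a + single (inr i) (inl j) (σ a) := rfl

lemma E0_mem (i j : Fin n) (a : R) : E0 σ n i j a ∈ qSub n R σ.toLinearMap := by
  constructor <;> intro u v <;>
    simp only [E0_apply, Matrix.add_apply, Matrix.single, Matrix.of_apply,
      AlgEquiv.toLinearMap_apply, Sum.inl.injEq, Sum.inr.injEq, reduceCtorEq,
      false_and, and_false, if_false, add_zero, zero_add] <;>
    first
    | (split_ifs <;> simp)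
    | simp

lemma E1_mem (i j : Fin n) (a : R) : E1 σ n i j a ∈ qSub n R σ.toLinearMap := by
  constructor <;> intro u v <;>
    simp only [E1_apply, Matrix.add_apply, Matrix.single, Matrix.of_apply,
      AlgEquiv.toLinearMap_apply, Sum.inl.injEq, Sum.inr.injEq, reduceCtorEq,
      false_and, and_false, if_false, add_zero, zero_add] <;>
    first
    | (split_ifs <;> simp)
    | simp

lemma gInvMat_E0 (i j : Fin n) (a : R) :
    gInvMat ⇑σ (E0 σ n i j a) = E0 σ n i j (σ a) := by
  ext u v
  rcases u with u | u <;> rcases v with v | v <;>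
    simp only [gInvMat, E0_apply, Matrix.add_apply, Matrix.single, Matrix.of_apply,
      Sum.isLeft_inl, Sum.isLeft_inr, Sum.inl.injEq, Sum.inr.injEq, reduceCtorEq,
      false_and, and_false, if_false, if_true, add_zero, zero_add] <;>
    first
    | (split_ifs <;> simp)
    | simp

lemma gInvMat_E1 (i j : Fin n) (a : R) :
    gInvMat ⇑σ (E1 σ n i j a) = -(E1 σ n i j (σ a)) := by
  ext u v
  rcases u with u | u <;> rcases v with v | v <;>
    simp only [gInvMat, E1_apply, Matrix.add_apply, Matrix.neg_apply, Matrix.single,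
      Matrix.of_apply, Sum.isLeft_inl, Sum.isLeft_inr, Sum.inl.injEq, Sum.inr.injEq, reduceCtorEq,
      false_and, and_false, if_false, if_true, add_zero, zero_add] <;>
    first
    | (split_ifs <;> simp)
    | simp


lemma E0_hom {p : ZMod 2} {a : R} (ha : σ a = ((-1:ℤ)^p.val) • a) (i j : Fin n) :
    gInvMat ⇑σ (E0 σ n i j a) = ((-1:ℤ)^p.val) • E0 σ n i j a := by
  rw [gInvMat_E0, ha, map_zsmul]

lemma E1_hom {p : ZMod 2} {a : R} (ha : σ a = ((-1:ℤ)^p.val) • a) (i j : Fin n) :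
    gInvMat ⇑σ (E1 σ n i j a) = ((-1:ℤ)^((p+1 : ZMod 2)).val) • E1 σ n i j a := by
  have h : ∀ q : ZMod 2, ((-1:ℤ)^((q+1:ZMod 2)).val) = -((-1:ℤ)^q.val) := by decide
  rw [gInvMat_E1, ha, map_zsmul, h p, neg_smul]

lemma br_mem {x y : Matrix (Fin n ⊕ Fin n) (Fin n ⊕ Fin n) R}
    (hx : x ∈ qSub n R σ.toLinearMap) (hy : y ∈ qSub n R σ.toLinearMap) (px py : ZMod 2)
    (hhx : gInvMat ⇑σ x = ((-1:ℤ)^px.val) • x) (hhy : gInvMat ⇑σ y = ((-1:ℤ)^py.val) • y) :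
    x * y - ((-1:ℤ)^(px*py).val) • (y * x) ∈ derivedSub n ⇑σ (qSub n R σ.toLinearMap) :=
  Submodule.subset_span ⟨x, hx, y, hy, px, py, hhx, hhy, rfl⟩

lemma mul_E0_E0 (i j l : Fin n) (a b : R) :
    E0 σ n i j a * E0 σ n j l b = E0 σ n i l (a * b) := by
  simp [E0_apply, add_mul, mul_add, _root_.map_mul]

lemma mul_E0_E1 (i j l : Fin n) (a b : R) :
    E0 σ n i j a * E1 σ n j l b = E1 σ n i l (a * b) := by
  simp [E0_apply, E1_apply, add_mul, mul_add, _root_.map_mul]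

lemma mul_E1_E0 (hσ : ∀ a, σ (σ a) = a) (i j l : Fin n) (a b : R) :
    E1 σ n i j a * E0 σ n j l b = E1 σ n i l (a * σ b) := by
  simp [E0_apply, E1_apply, add_mul, mul_add, _root_.map_mul, hσ]
  abel

lemma mul_E1_E1 (hσ : ∀ a, σ (σ a) = a) (i j l : Fin n) (a b : R) :
    E1 σ n i j a * E1 σ n j l b = E0 σ n i l (a * σ b) := by
  simp [E0_apply, E1_apply, add_mul, mul_add, _root_.map_mul, hσ]
  abel

lemma mul_E0_E0_zero {j i' : Fin n} (h : j ≠ i') (i l : Fin n) (a b : R) :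
    E0 σ n i j a * E0 σ n i' l b = 0 := by
  simp [E0_apply, add_mul, mul_add, single_mul_single_of_ne, h]

lemma mul_E0_E1_zero {j i' : Fin n} (h : j ≠ i') (i l : Fin n) (a b : R) :
    E0 σ n i j a * E1 σ n i' l b = 0 := by
  simp [E0_apply, E1_apply, add_mul, mul_add, single_mul_single_of_ne, h]

lemma mul_E1_E0_zero {j i' : Fin n} (h : j ≠ i') (i l : Fin n) (a b : R) :
    E1 σ n i j a * E0 σ n i' l b = 0 := by
  simp [E0_apply, E1_apply, add_mul, mul_add, single_mul_single_of_ne, h]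

lemma mul_E1_E1_zero {j i' : Fin n} (h : j ≠ i') (i l : Fin n) (a b : R) :
    E1 σ n i j a * E1 σ n i' l b = 0 := by
  simp [E1_apply, add_mul, mul_add, single_mul_single_of_ne, h]


lemma E0_diag_mem_homog (hσ : ∀ a, σ (σ a) = a) {p : ZMod 2} {a : R}
    (ha : σ a = ((-1:ℤ)^p.val) • a) (i : Fin n) :
    E0 σ n i i a ∈ derivedSub n ⇑σ (qSub n R σ.toLinearMap) := by
  have h1 : σ (1:R) = ((-1:ℤ)^(0:ZMod 2).val) • (1:R) := by simp
  have hc := br_mem (E1_mem i i a) (E1_mem i i 1) (p+1) (0+1) (E1_hom ha i i) (E1_hom h1 i i)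
  rw [mul_E1_E1 hσ, mul_E1_E1 hσ, _root_.map_one, mul_one, one_mul, ha, map_zsmul, smul_smul] at hc
  have hco : ∀ q : ZMod 2, ((-1:ℤ)^((((q+1)*(0+1)) : ZMod 2)).val) * ((-1:ℤ)^q.val) = -1 := by
    decide
  rw [hco p] at hc
  have h2 : E0 σ n i i a - (-1:ℤ) • E0 σ n i i a = (2:k) • E0 σ n i i a := by
    rw [neg_one_smul, sub_neg_eq_add, two_smul]
  rw [h2] at hc
  have := Submodule.smul_mem (derivedSub n ⇑σ (qSub n R σ.toLinearMap)) (⅟(2:k)) hc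
  rwa [invOf_smul_smul] at this

lemma E0_offdiag_mem_homog {p : ZMod 2} {a : R}
    (ha : σ a = ((-1:ℤ)^p.val) • a) {i j : Fin n} (hij : i ≠ j) :
    E0 σ n i j a ∈ derivedSub n ⇑σ (qSub n R σ.toLinearMap) := by
  have h1 : σ (1:R) = ((-1:ℤ)^(0:ZMod 2).val) • (1:R) := by simp
  have hc := br_mem (E0_mem i i a) (E0_mem i j 1) p 0 (E0_hom ha i i) (E0_hom h1 i j)
  rwa [mul_E0_E0, mul_one, mul_E0_E0_zero (Ne.symm hij), smul_zero, sub_zero] at hc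

lemma E1_offdiag_mem_homog {p : ZMod 2} {a : R}
    (ha : σ a = ((-1:ℤ)^p.val) • a) {i j : Fin n} (hij : i ≠ j) (hσ : ∀ a, σ (σ a) = a) :
    E1 σ n i j a ∈ derivedSub n ⇑σ (qSub n R σ.toLinearMap) := by
  have h1 : σ (1:R) = ((-1:ℤ)^(0:ZMod 2).val) • (1:R) := by simp
  have hc := br_mem (E1_mem i i a) (E0_mem i j 1) (p+1) 0 (E1_hom ha i i) (E0_hom h1 i j)
  rwa [mul_E1_E0 hσ, _root_.map_one, mul_one, mul_E0_E1_zero (Ne.symm hij), smul_zero, sub_zero] at hc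

lemma E1_diag_diff_mem_homog {p : ZMod 2} {a : R}
    (ha : σ a = ((-1:ℤ)^p.val) • a) {i j : Fin n} (hij : i ≠ j) (hσ : ∀ a, σ (σ a) = a) :
    E1 σ n i i a - E1 σ n j j a ∈ derivedSub n ⇑σ (qSub n R σ.toLinearMap) := by
  have h1 : σ (1:R) = ((-1:ℤ)^(0:ZMod 2).val) • (1:R) := by simp
  have hc := br_mem (E1_mem i j a) (E0_mem j i 1) (p+1) 0 (E1_hom ha i j) (E0_hom h1 j i)
  have hco : ∀ q : ZMod 2, ((-1:ℤ)^((((q+1)*0) : ZMod 2)).val) = 1 := by decide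
  rwa [mul_E1_E0 hσ, _root_.map_one, mul_one, mul_E0_E1, one_mul, hco p, one_smul] at hc

lemma E1_gc_mem (hσ : ∀ a, σ (σ a) = a) (i : Fin n) {c : R}
    (hc : c ∈ gcSet R (· * ·) ⇑σ) :
    E1 σ n i i c ∈ derivedSub n ⇑σ (qSub n R σ.toLinearMap) := by
  obtain ⟨x, y, px, py, hx, hy, rfl⟩ := hc
  have hb := br_mem (E0_mem i i x) (E1_mem i i y) px (py+1) (E0_hom hx i i) (E1_hom hy i i)
  rw [mul_E0_E1, mul_E1_E0 hσ, hx, mul_smul_comm, map_zsmul, smul_smul] at hb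
  have hco : ∀ q q' : ZMod 2,
      ((-1:ℤ)^(((q*(q'+1)) : ZMod 2)).val) * ((-1:ℤ)^q.val) = ((-1:ℤ)^(((q*q') : ZMod 2)).val) := by
    decide
  rw [hco px py] at hb
  have : E1 σ n i i (x * y - ((-1:ℤ)^(px*py).val) • (y * x))
      = E1 σ n i i (x * y) - ((-1:ℤ)^(px*py).val) • E1 σ n i i (y * x) := by
    rw [map_sub, map_zsmul]
  rw [this]
  exact hb

lemma even_odd (hσ : ∀ a, σ (σ a) = a) (a : R) :
    ∃ a0 a1 : R, σ a0 = ((-1:ℤ)^(0:ZMod 2).val) • a0 ∧ σ a1 = ((-1:ℤ)^(1:ZMod 2).val) • a1 ∧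
      a = a0 + a1 := by
  have h0 : ((-1:ℤ)^(0:ZMod 2).val) = 1 := by decide
  have h1 : ((-1:ℤ)^(1:ZMod 2).val) = -1 := by decide
  refine ⟨⅟(2:k) • (a + σ a), ⅟(2:k) • (a - σ a), ?_, ?_, ?_⟩
  · rw [_root_.map_smul, map_add, hσ, h0, one_smul, add_comm]
  · rw [_root_.map_smul, map_sub, hσ, h1, neg_one_smul, ← smul_neg, neg_sub]
  · rw [← smul_add]
    have h2 : (a + σ a) + (a - σ a) = (2:k) • a := by rw [two_smul]; abel
    rw [h2, invOf_smul_smul]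

lemma E0_mem_D (hσ : ∀ a, σ (σ a) = a) (i j : Fin n) (a : R) :
    E0 σ n i j a ∈ derivedSub n ⇑σ (qSub n R σ.toLinearMap) := by
  obtain ⟨a0, a1, h0, h1, rfl⟩ := even_odd hσ a
  rw [map_add]
  by_cases hij : i = j
  · subst hij
    exact add_mem (E0_diag_mem_homog hσ h0 i) (E0_diag_mem_homog hσ h1 i)
  · exact add_mem (E0_offdiag_mem_homog h0 hij) (E0_offdiag_mem_homog h1 hij)

lemma E1_offdiag_mem_D (hσ : ∀ a, σ (σ a) = a) {i j : Fin n} (hij : i ≠ j) (a : R) :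
    E1 σ n i j a ∈ derivedSub n ⇑σ (qSub n R σ.toLinearMap) := by
  obtain ⟨a0, a1, h0, h1, rfl⟩ := even_odd hσ a
  rw [map_add]
  exact add_mem (E1_offdiag_mem_homog h0 hij hσ) (E1_offdiag_mem_homog h1 hij hσ)

lemma E1_diag_diff_mem_D (hσ : ∀ a, σ (σ a) = a) {i j : Fin n} (hij : i ≠ j) (a : R) :
    E1 σ n i i a - E1 σ n j j a ∈ derivedSub n ⇑σ (qSub n R σ.toLinearMap) := by
  obtain ⟨a0, a1, h0, h1, rfl⟩ := even_odd hσ a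
  have h := add_mem (E1_diag_diff_mem_homog h0 hij hσ) (E1_diag_diff_mem_homog h1 hij hσ)
  have he : (E1 σ n i i a0 - E1 σ n j j a0) + (E1 σ n i i a1 - E1 σ n j j a1)
      = E1 σ n i i (a0 + a1) - E1 σ n j j (a0 + a1) := by
    rw [map_add, map_add]; abel
  rwa [he] at h


lemma mem_qSub {M : Matrix (Fin n ⊕ Fin n) (Fin n ⊕ Fin n) R} :
    M ∈ qSub n R σ.toLinearMap ↔
      (∀ i j, M (inr i) (inr j) = σ (M (inl i) (inl j))) ∧
      (∀ i j, M (inr i) (inl j) = σ (M (inl i) (inr j))) := Iff.rfl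

lemma qSub_mul (hσ : ∀ a, σ (σ a) = a) {x y : Matrix (Fin n ⊕ Fin n) (Fin n ⊕ Fin n) R}
    (hx : x ∈ qSub n R σ.toLinearMap) (hy : y ∈ qSub n R σ.toLinearMap) :
    x * y ∈ qSub n R σ.toLinearMap := by
  obtain ⟨hx1, hx2⟩ := mem_qSub.1 hx
  obtain ⟨hy1, hy2⟩ := mem_qSub.1 hy
  refine mem_qSub.2 ⟨fun i j => ?_, fun i j => ?_⟩ <;>
    simp only [Matrix.mul_apply, Fintype.sum_sum_type, map_add, map_sum, _root_.map_mul,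
      hx1, hx2, hy1, hy2, hσ] <;>
    exact add_comm _ _

lemma hom_entries {x : Matrix (Fin n ⊕ Fin n) (Fin n ⊕ Fin n) R} {p : ZMod 2}
    (h : gInvMat ⇑σ x = ((-1:ℤ)^p.val) • x) :
    (∀ u v, σ (x (inl u) (inl v)) = ((-1:ℤ)^p.val) • x (inl u) (inl v)) ∧
    (∀ u v, σ (x (inl u) (inr v)) = ((-1:ℤ)^((p+1 : ZMod 2)).val) • x (inl u) (inr v)) := by
  have hs : ∀ q : ZMod 2, ((-1:ℤ)^((q+1:ZMod 2)).val) = -((-1:ℤ)^q.val) := by decide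
  constructor <;> intro u v
  · have h2 := Matrix.ext_iff.2 h (inl u) (inl v)
    simpa [gInvMat, Matrix.smul_apply] using h2
  · have h2 := Matrix.ext_iff.2 h (inl u) (inr v)
    simp only [gInvMat, Matrix.of_apply, Sum.isLeft_inl, Sum.isLeft_inr, if_false,
      Matrix.smul_apply, Bool.true_eq_false] at h2
    rw [hs p, neg_smul, ← h2, neg_neg]

lemma qSub_decomp (M : Matrix (Fin n ⊕ Fin n) (Fin n ⊕ Fin n) R)
    (hM : M ∈ qSub n R σ.toLinearMap) :
    M = ∑ i, ∑ j, (E0 σ n i j (M (inl i) (inl j)) + E1 σ n i j (M (inl i) (inr j))) := by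
  obtain ⟨h1, h2⟩ := mem_qSub.1 hM
  ext u v
  rcases u with u | u <;> rcases v with v | v <;>
    simp [Matrix.sum_apply, Matrix.add_apply, E0_apply, E1_apply, Matrix.single,
      ite_and, h1, h2, Finset.sum_ite_eq, eq_comm]

end Aux




/-- For a unital associative superalgebra `R` over `k` (2 invertible) and `n ≥ 2`,
`sq_n(R) = [q_n(R), q_n(R)]` consists exactly of the matrices `[[A,B],[ρ(B),ρ(A)]] ∈ q_n(R)`
with `Tr(B) ∈ [R,R]`, the span of graded commutators of `R`. -/
theorem sq_characterization (σ : R ≃ₐ[k] R) (hσ : ∀ a, σ (σ a) = a) (n : ℕ) (hn : 2 ≤ n) :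
    derivedSub n ⇑σ (qSub n R σ.toLinearMap)
      = qSub n R σ.toLinearMap ⊓
          Submodule.comap (trUR n) (Submodule.span k (gcSet R (· * ·) ⇑σ)) := by
  apply le_antisymm
  · -- derived ⊆ RHS
    rw [derivedSub, Submodule.span_le]
    rintro z ⟨x, hx, y, hy, px, py, hhx, hhy, rfl⟩
    have hxE := hom_entries hhx
    have hyE := hom_entries hhy
    have hε : ∀ p q : ZMod 2, ((-1:ℤ)^((p*q : ZMod 2)).val) * ((-1:ℤ)^((p*q : ZMod 2)).val) = 1 := by
      decide
    have hs1 : ∀ p q : ZMod 2, ((-1:ℤ)^((p*(q+1) : ZMod 2)).val)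
        = ((-1:ℤ)^((p*q : ZMod 2)).val) * ((-1:ℤ)^p.val) := by decide
    have hs2 : ∀ p q : ZMod 2, ((-1:ℤ)^((q*(p+1) : ZMod 2)).val)
        = ((-1:ℤ)^((p*q : ZMod 2)).val) * ((-1:ℤ)^q.val) := by decide
    refine Submodule.mem_inf.2 ⟨?_, ?_⟩
    · exact Submodule.sub_mem _ (qSub_mul hσ hx hy) (zsmul_mem (qSub_mul hσ hy hx) _)
    · rw [Submodule.mem_comap]
      have hxq := (mem_qSub.1 hx).1
      have hyq := (mem_qSub.1 hy).1
      have h1 : trUR (k := k) n (x * y) = ∑ i, ∑ u,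
          (x (inl i) (inl u) * y (inl u) (inr i)
            + x (inl i) (inr u) * σ (y (inl u) (inl i))) := by
        simp only [trUR, LinearMap.coe_mk, AddHom.coe_mk, Matrix.mul_apply,
          Fintype.sum_sum_type, hyq]
        simp [Finset.sum_add_distrib]
      have h2 : trUR (k := k) n (y * x) = ∑ i, ∑ u,
          (y (inl u) (inl i) * x (inl i) (inr u)
            + y (inl u) (inr i) * σ (x (inl i) (inl u))) := by
        simp only [trUR, LinearMap.coe_mk, AddHom.coe_mk, Matrix.mul_apply,
          Fintype.sum_sum_type, hxq]
        rw [Finset.sum_comm]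
        simp [Finset.sum_add_distrib]
      have expand : trUR (k := k) n (x * y - ((-1:ℤ)^(px*py).val) • (y * x)) =
          ∑ i, ∑ u, ((x (inl i) (inl u) * y (inl u) (inr i)
              + x (inl i) (inr u) * σ (y (inl u) (inl i)))
            - ((-1:ℤ)^(px*py).val) • (y (inl u) (inl i) * x (inl i) (inr u)
              + y (inl u) (inr i) * σ (x (inl i) (inl u)))) := by
        rw [map_sub, map_zsmul, h1, h2, Finset.smul_sum]
        simp_rw [Finset.smul_sum]
        rw [← Finset.sum_sub_distrib]
        refine Finset.sum_congr rfl fun i _ => ?_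
        rw [← Finset.sum_sub_distrib]
      rw [expand]
      refine Submodule.sum_mem _ fun i _ => Submodule.sum_mem _ fun u _ => ?_
      have hc1 : x (inl i) (inl u) * y (inl u) (inr i)
          - ((-1:ℤ)^(((px*(py+1)) : ZMod 2)).val) • (y (inl u) (inr i) * x (inl i) (inl u))
          ∈ gcSet R (· * ·) ⇑σ :=
        ⟨_, _, px, py+1, hxE.1 i u, hyE.2 u i, rfl⟩
      have hc2 : y (inl u) (inl i) * x (inl i) (inr u)
          - ((-1:ℤ)^(((py*(px+1)) : ZMod 2)).val) • (x (inl i) (inr u) * y (inl u) (inl i))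
          ∈ gcSet R (· * ·) ⇑σ :=
        ⟨_, _, py, px+1, hyE.1 u i, hxE.2 i u, rfl⟩
      have identity : (x (inl i) (inl u) * y (inl u) (inr i)
              + x (inl i) (inr u) * σ (y (inl u) (inl i)))
            - ((-1:ℤ)^(px*py).val) • (y (inl u) (inl i) * x (inl i) (inr u)
              + y (inl u) (inr i) * σ (x (inl i) (inl u)))
          = (x (inl i) (inl u) * y (inl u) (inr i)
              - ((-1:ℤ)^(((px*(py+1)) : ZMod 2)).val) • (y (inl u) (inr i) * x (inl i) (inl u)))
            + (-((-1:ℤ)^((px*py : ZMod 2)).val)) •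
              (y (inl u) (inl i) * x (inl i) (inr u)
              - ((-1:ℤ)^(((py*(px+1)) : ZMod 2)).val) • (x (inl i) (inr u) * y (inl u) (inl i))) := by
        rw [hxE.1 i u, hyE.1 u i, hs1 px py, hs2 px py]
        simp only [mul_smul_comm, smul_add, smul_sub, smul_smul, neg_smul, neg_neg]
        have hco : (-((-1:ℤ)^((px*py : ZMod 2)).val) * (((-1:ℤ)^((px*py : ZMod 2)).val)
            * ((-1:ℤ)^py.val))) = -((-1:ℤ)^py.val) := by
          rw [neg_mul, ← mul_assoc, hε px py, one_mul]
        rw [hco, neg_smul]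
        abel
      rw [identity]
      exact add_mem (Submodule.subset_span hc1)
        (zsmul_mem (Submodule.subset_span hc2) _)
  · -- RHS ⊆ derived
    intro M hMm
    obtain ⟨hMq, hMtr⟩ := Submodule.mem_inf.1 hMm
    rw [Submodule.mem_comap] at hMtr
    have hdec := qSub_decomp M hMq
    have hn0 : 0 < n := by omega
    set i0 : Fin n := ⟨0, hn0⟩ with hi0
    have hIte : ∑ i : Fin n, ∑ j : Fin n,
        (if i = j then E1 σ n i0 i0 (M (inl i) (inr j)) else 0)
        = E1 σ n i0 i0 (trUR (k := k) n M) := by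
      have hin : ∀ i : Fin n, ∑ j : Fin n,
          (if i = j then E1 σ n i0 i0 (M (inl i) (inr j)) else 0)
          = E1 σ n i0 i0 (M (inl i) (inr i)) := by
        intro i
        rw [Finset.sum_ite_eq]
        simp
      rw [Finset.sum_congr rfl fun i _ => hin i, ← map_sum]
      congr 1
    have key : M = (∑ i, ∑ j, E0 σ n i j (M (inl i) (inl j)))
        + (∑ i, ∑ j, (E1 σ n i j (M (inl i) (inr j))
            - if i = j then E1 σ n i0 i0 (M (inl i) (inr j)) else 0))
        + E1 σ n i0 i0 (trUR (k := k) n M) := by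
      rw [← hIte]
      conv_lhs => rw [hdec]
      rw [← Finset.sum_add_distrib, ← Finset.sum_add_distrib]
      refine Finset.sum_congr rfl fun i _ => ?_
      rw [← Finset.sum_add_distrib, ← Finset.sum_add_distrib]
      refine Finset.sum_congr rfl fun j _ => ?_
      abel
    rw [key]
    refine add_mem (add_mem (Submodule.sum_mem _ fun i _ => Submodule.sum_mem _ fun j _ =>
      E0_mem_D hσ i j _) (Submodule.sum_mem _ fun i _ => Submodule.sum_mem _ fun j _ => ?_)) ?_
    · by_cases hij : i = j
      · subst hij
        rw [if_pos rfl]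
        by_cases h0 : i = i0
        · subst h0
          rw [sub_self]
          exact zero_mem _
        · exact E1_diag_diff_mem_D hσ h0 _
      · rw [if_neg hij, sub_zero]
        exact E1_offdiag_mem_D hσ hij _
    · refine Submodule.span_induction (fun c hcg => E1_gc_mem hσ i0 hcg) ?_ ?_ ?_ hMtr
      · rw [map_zero]
        exact zero_mem _
      · intro u v _ _ hu hv
        rw [map_add]
        exact add_mem hu hv
      · intro c u _ hu
        rw [LinearMap.map_smul]
        exact Submodule.smul_mem _ _ hu
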